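/- Let 1 < p < ∞ and let Y be a Banach space containing a normalized sequence (y_n) with upper p-estimates. Then there exists a bounded linear operator T from G = d_*((1/n)_{n∈ℕ}) into Y such that ‖T e_n‖ = 1 for every n ∈ ℕ, where (e_n) is the unit vector basis of G. -/

import Mathlib

open Filter Topology

/-- `rearrSum x n = ∑_{k=1}^n x̃_k`, the sum of the `n` largest values of `(|x_k|)`,
i.e. the `n`-th partial sum of the nonincreasing rearrangement of `(|x_k|)`; it is the
supremum of `∑_{k ∈ A} |x_k|` over finite sets `A ⊆ ℕ` of cardinality `n`. -/
noncomputable def rearrSum (x : ℕ → ℝ) (n : ℕ) : ℝ :=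
  sSup ((fun A : Finset ℕ => ∑ k ∈ A, |x k|) '' {A : Finset ℕ | A.card = n})

/-- A sequence of positive reals is admissible if it is nonincreasing, starts at `1`,
tends to `0` and is not summable. -/
def Admissible (w : ℕ → ℝ) : Prop :=
  (∀ n, 0 < w n) ∧ (∀ n, w (n + 1) ≤ w n) ∧ w 0 = 1 ∧
    Tendsto w atTop (𝓝 0) ∧ ¬ Summable w

/-- The underlying set of sequences of `d_*(w)`: sequences `x ∈ c₀` with
`(∑_{k=1}^n x̃_k) / (∑_{k=1}^n w_k) → 0`. -/
def dStarSet (w : ℕ → ℝ) : Set (ℕ → ℝ) :=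
  {x | Tendsto x atTop (𝓝 0) ∧
    Tendsto (fun n => rearrSum x n / ∑ k ∈ Finset.range n, w k) atTop (𝓝 0)}

/-- The norm of `d_*(w)`: `‖x‖ = sup_n (∑_{k=1}^n x̃_k) / (∑_{k=1}^n w_k)`. -/
noncomputable def dStarNorm (w : ℕ → ℝ) (x : ℕ → ℝ) : ℝ :=
  ⨆ n : ℕ, rearrSum x n / ∑ k ∈ Finset.range n, w k

/-- A normed space `D` is a representation of `d_*(w)` if there is a linear bijection `j`
from `D` onto the set of sequences of `d_*(w)` carrying the norm of `D` to the norm of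
`d_*(w)`; i.e. `D` "is" the space `d_*(w)` endowed with its canonical norm. -/
def IsDStarRep (w : ℕ → ℝ) (D : Type*) [NormedAddCommGroup D] [NormedSpace ℝ D]
    (j : D →ₗ[ℝ] (ℕ → ℝ)) : Prop :=
  Function.Injective j ∧ Set.range j = dStarSet w ∧ ∀ x : D, ‖x‖ = dStarNorm w (j x)

/-- `(y n)` is a basic sequence: it is a Schauder basis of the closed linear span of its
range, i.e. every element of that closed span has a unique representation as a norm
convergent series `∑ aₖ yₖ`. -/
def IsBasicSeq {Y : Type*} [NormedAddCommGroup Y] [NormedSpace ℝ Y] (y : ℕ → Y) : Prop :=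
  ∀ x ∈ closure ((Submodule.span ℝ (Set.range y) : Submodule ℝ Y) : Set Y),
    ∃! a : ℕ → ℝ,
      Filter.Tendsto (fun n => ∑ k ∈ Finset.range n, a k • y k) Filter.atTop (nhds x)

/-- Two sequences are equivalent if a series `∑ aₖ yₖ` converges exactly when the
series `∑ aₖ zₖ` converges. -/
def SeqEquivalent {Y Z : Type*} [NormedAddCommGroup Y] [NormedSpace ℝ Y]
    [NormedAddCommGroup Z] [NormedSpace ℝ Z] (y : ℕ → Y) (z : ℕ → Z) : Prop :=
  ∀ a : ℕ → ℝ,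
    (∃ x : Y, Filter.Tendsto (fun n => ∑ k ∈ Finset.range n, a k • y k)
      Filter.atTop (nhds x)) ↔
    (∃ x : Z, Filter.Tendsto (fun n => ∑ k ∈ Finset.range n, a k • z k)
      Filter.atTop (nhds x))

/-- `(y n)` is a symmetric basic sequence: it is basic and every permutation of it is a
basic sequence equivalent to it. -/
def IsSymmetricBasicSeq {Y : Type*} [NormedAddCommGroup Y] [NormedSpace ℝ Y]
    (y : ℕ → Y) : Prop :=
  IsBasicSeq y ∧ ∀ σ : Equiv.Perm ℕ, IsBasicSeq (y ∘ σ) ∧ SeqEquivalent (y ∘ σ) y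

/-- `(y n)` is equivalent to the unit vector basis of `ℓ₁`: there is `c > 0` with
`‖∑ aₖ yₖ‖ ≥ c ∑ |aₖ|` for all finitely supported scalars. -/
def EquivL1UnitBasis {Y : Type*} [NormedAddCommGroup Y] [NormedSpace ℝ Y]
    (y : ℕ → Y) : Prop :=
  ∃ c : ℝ, 0 < c ∧ ∀ (n : ℕ) (a : ℕ → ℝ),
    c * ∑ k ∈ Finset.range n, |a k| ≤ ‖∑ k ∈ Finset.range n, a k • y k‖

/-- A normalized sequence `(y n)` has upper `p`-estimates if there is `C > 0` with
`‖∑_{k=1}^n aₖ yₖ‖ ≤ C (∑_{k=1}^n |aₖ|^p)^(1/p)` for all `n` and all scalars. -/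
def HasUpperPEstimates {Y : Type*} [NormedAddCommGroup Y] [NormedSpace ℝ Y]
    (p : ℝ) (y : ℕ → Y) : Prop :=
  ∃ C : ℝ, 0 < C ∧ ∀ (n : ℕ) (a : ℕ → ℝ),
    ‖∑ k ∈ Finset.range n, a k • y k‖ ≤
      C * (∑ k ∈ Finset.range n, |a k| ^ p) ^ (1 / p)


lemma aux_log_rpow (ε : ℝ) (hε : 0 < ε) (t : ℝ) (ht : 1 ≤ t) :
    1 + Real.log t ≤ (1 + 1/ε) * t ^ ε := by
  have ht0 : 0 < t := by linarith
  have hs0 : (0:ℝ) < t ^ ε := Real.rpow_pos_of_pos ht0 ε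
  have hs1 : (1:ℝ) ≤ t ^ ε := Real.one_le_rpow ht hε.le
  have hlog : Real.log (t ^ ε) ≤ t ^ ε - 1 := Real.log_le_sub_one_of_pos hs0
  rw [Real.log_rpow ht0] at hlog
  have h1 : Real.log t ≤ (t ^ ε - 1)/ε := by
    rw [le_div_iff₀ hε]; linarith [mul_comm ε (Real.log t)]
  have expand : (1 + 1/ε) * t^ε = t^ε + t^ε/ε := by ring
  rw [expand]
  have h2 : (t^ε - 1)/ε ≤ t^ε/ε := by gcongr; linarith
  linarith

lemma aux_harmonic : ∀ n : ℕ, 1 ≤ n → ∑ k ∈ Finset.range n, 1/((k:ℝ)+1) ≤ 1 + Real.log n := by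
  intro n hn
  induction n with
  | zero => omega
  | succ m ih =>
    rcases Nat.eq_or_lt_of_le hn with h1 | h1
    · simp [← h1]
    · have hm : 1 ≤ m := by omega
      have hml : (1:ℝ) ≤ m := by exact_mod_cast hm
      have hstep : Real.log m + 1/((m:ℝ)+1) ≤ Real.log (m+1) := by
        have hpos : (0:ℝ) < ((m:ℝ))/((m:ℝ)+1) := by positivity
        have hls := Real.log_le_sub_one_of_pos hpos
        have hlog : Real.log ((m:ℝ)/((m:ℝ)+1)) = Real.log m - Real.log (m+1) := by
          rw [Real.log_div (by positivity) (by positivity)]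
        rw [hlog] at hls
        have h0 : ((m:ℝ))/((m:ℝ)+1) - 1 = -(1/((m:ℝ)+1)) := by field_simp; ring
        rw [h0] at hls
        linarith
      rw [Finset.sum_range_succ]
      have := ih hm
      push_cast
      linarith

lemma aux_count (M Cε ε q : ℝ) (hC : 0 < Cε) (hM : 0 < M) (hε : 0 < ε) (hε1 : ε < 1)
    (hqe : (1-ε)*q = 1) (hq0 : 0 < q)
    (n : ℕ) (t : ℝ) (ht : 0 < t) (hbound : (n:ℝ) * t ≤ M * Cε * (n:ℝ) ^ ε) :
    (n:ℝ) ≤ (M * Cε / t) ^ q := by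
  rcases Nat.eq_zero_or_pos n with h0 | h1
  · subst h0; simpa using Real.rpow_nonneg (by positivity) q
  · have hn0 : (0:ℝ) < n := by exact_mod_cast h1
    have hne : (0:ℝ) < (n:ℝ)^ε := Real.rpow_pos_of_pos hn0 ε
    have hsplit : (n:ℝ) = (n:ℝ)^(1-ε) * (n:ℝ)^ε := by
      rw [← Real.rpow_add hn0]; norm_num
    have h2 : (n:ℝ)^(1-ε) ≤ M * Cε / t := by
      rw [le_div_iff₀ ht]
      have hb := hbound
      rw [hsplit] at hb
      nlinarith [hne, ht, Real.rpow_nonneg hn0.le (1-ε)]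
    calc (n:ℝ) = ((n:ℝ)^(1-ε))^q := by
          rw [← Real.rpow_mul hn0.le, hqe, Real.rpow_one]
      _ ≤ (M*Cε/t)^q := Real.rpow_le_rpow (Real.rpow_nonneg hn0.le _) h2 hq0.le

lemma rearr_bddAbove (u : ℕ → ℝ) (B : ℝ) (hB : ∀ k, |u k| ≤ B) (n : ℕ) :
    BddAbove ((fun A : Finset ℕ => ∑ k ∈ A, |u k|) '' {A : Finset ℕ | A.card = n}) := by
  refine ⟨n * B, ?_⟩
  rintro s ⟨A, hA, rfl⟩
  simp only [Set.mem_setOf_eq] at hA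
  calc ∑ k ∈ A, |u k| ≤ ∑ _k ∈ A, B := Finset.sum_le_sum (fun k _ => hB k)
    _ = A.card * B := by rw [Finset.sum_const, nsmul_eq_mul]
    _ = n * B := by rw [hA]

lemma sum_le_rearrSum (u : ℕ → ℝ) (B : ℝ) (hB : ∀ k, |u k| ≤ B) (A : Finset ℕ) :
    ∑ k ∈ A, |u k| ≤ rearrSum u A.card :=
  le_csSup (rearr_bddAbove u B hB _) ⟨A, rfl, rfl⟩

lemma rearrSum_zero (u : ℕ → ℝ) : rearrSum u 0 = 0 := by
  have h1 : {A : Finset ℕ | A.card = 0} = {(∅ : Finset ℕ)} := by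
    ext A; simp [Finset.card_eq_zero]
  rw [rearrSum, h1, Set.image_singleton]
  simp


lemma aux_geom (r : ℝ) (h0 : 0 ≤ r) (h1 : r < 1) (J : ℕ) :
    ∑ j ∈ Finset.range J, r ^ j ≤ (1 - r)⁻¹ := by
  rw [geom_sum_eq (by linarith : r ≠ 1)]
  rw [div_le_iff_of_neg (by linarith : r - 1 < 0)]
  have := pow_nonneg h0 J
  have h2 : (0:ℝ) < (1-r)⁻¹ := inv_pos.mpr (by linarith)
  have : (1 - r)⁻¹ * (1-r) = 1 := inv_mul_cancel₀ (by linarith)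
  nlinarith

lemma aux_master (p q Cε M : ℝ) (hp : 1 < p) (hq0 : 0 < q) (hqp : q < p)
    (hCε : 0 < Cε) (hM : 0 < M) (u : ℕ → ℝ)
    (hub : ∀ k, |u k| ≤ M)
    (hcount : ∀ (A : Finset ℕ) (t : ℝ), 0 < t → (∀ k ∈ A, t ≤ |u k|) →
      (A.card : ℝ) ≤ (M * Cε / t) ^ q)
    (A : Finset ℕ) :
    ∑ k ∈ A, |u k| ^ p ≤ (2*Cε)^q * (1 - (2:ℝ)^(q-p))⁻¹ * M ^ p := by
  set r : ℝ := (2:ℝ)^(q-p) with hr_def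
  have hr0 : 0 < r := Real.rpow_pos_of_pos (by norm_num) _
  have hr1 : r < 1 := Real.rpow_lt_one_of_one_lt_of_neg (by norm_num) (by linarith)
  have hinv0 : (0:ℝ) < (1-r)⁻¹ := inv_pos.mpr (by linarith)
  have hMp : (0:ℝ) < M ^ p := Real.rpow_pos_of_pos hM p
  have h2C : (0:ℝ) < (2*Cε)^q := Real.rpow_pos_of_pos (by positivity) q
  have hK0 : (0:ℝ) ≤ (2*Cε)^q * (1 - r)⁻¹ * M ^ p := by positivity
  classical
  set B : Finset ℕ := A.filter (fun k => 0 < |u k|) with hB_def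
  have hsum_eq : ∑ k ∈ A, |u k| ^ p = ∑ k ∈ B, |u k| ^ p := by
    rw [hB_def, Finset.sum_filter_of_ne]
    intro k _ hne
    by_contra h
    have : |u k| = 0 := le_antisymm (by simpa using h) (abs_nonneg _)
    rw [this, Real.zero_rpow (by linarith : p ≠ 0)] at hne
    exact hne rfl
  rw [hsum_eq]
  rcases B.eq_empty_or_nonempty with hBe | hBne
  · rw [hBe]; simpa using hK0
  -- minimum positive value on B
  have hBim : (B.image (fun k => |u k|)).Nonempty := hBne.image _
  set μ : ℝ := (B.image (fun k => |u k|)).min' hBim with hμ_def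
  have hμ_mem := Finset.min'_mem _ hBim
  obtain ⟨k₀, hk₀B, hk₀⟩ := Finset.mem_image.mp hμ_mem
  have hμpos : 0 < μ := by
    rw [hμ_def, ← hk₀]; exact (Finset.mem_filter.mp hk₀B).2
  have hμ_le : ∀ k ∈ B, μ ≤ |u k| := fun k hk =>
    Finset.min'_le _ _ (Finset.mem_image_of_mem _ hk)
  -- choose J with M / 2^J < μ
  obtain ⟨J, hJ⟩ : ∃ J : ℕ, M / μ < 2 ^ J := pow_unbounded_of_one_lt _ (by norm_num)
  have hJ' : M / 2 ^ J < μ := by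
    rw [div_lt_iff₀ (by positivity)] at hJ ⊢
    calc M < μ * 2^J := by linarith [hJ]
    _ = μ * 2^J := rfl
  -- level sets
  set L : ℕ → Finset ℕ := fun jj =>
    B.filter (fun k => |u k| ≤ M / 2^jj ∧ M / 2^(jj+1) < |u k|) with hL_def
  -- cover
  have hcover : B ⊆ (Finset.range J).biUnion L := by
    intro k hk
    have hk0 : 0 < |u k| := (Finset.mem_filter.mp hk).2
    have hkμ : μ ≤ |u k| := hμ_le k hk
    have hkM : |u k| ≤ M := hub k
    have hex : ∃ i, M / 2^(i+1) < |u k| := by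
      rcases Nat.eq_zero_or_pos J with h0 | h1
      · exfalso; rw [h0] at hJ'; simp at hJ'; linarith
      · exact ⟨J - 1, by
          have : J - 1 + 1 = J := Nat.succ_pred_eq_of_pos h1
          rw [this]; linarith⟩
    set jk := Nat.find hex with hjk_def
    have hjkP : M / 2^(jk+1) < |u k| := Nat.find_spec hex
    have hjkJ : jk < J := by
      rcases Nat.eq_zero_or_pos J with h0 | h1
      · exfalso; rw [h0] at hJ'; simp at hJ'; linarith
      · have : jk ≤ J - 1 := Nat.find_min' hex (by
          have : J - 1 + 1 = J := Nat.succ_pred_eq_of_pos h1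
          rw [this]; linarith)
        omega
    have hup2 : |u k| ≤ M / 2^jk := by
      rcases Nat.eq_zero_or_pos jk with h0 | h1
      · rw [h0]; simpa using hkM
      · have hlt := Nat.find_min hex (m := jk - 1) (by omega)
        push_neg at hlt
        have : jk - 1 + 1 = jk := Nat.succ_pred_eq_of_pos h1
        rwa [this] at hlt
    exact Finset.mem_biUnion.mpr ⟨jk, Finset.mem_range.mpr hjkJ,
      Finset.mem_filter.mpr ⟨hk, hup2, hjkP⟩⟩
  -- disjointness
  have hdisj_lt : ∀ i j' : ℕ, i < j' → Disjoint (L i) (L j') := by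
    intro i j' hlt
    refine Finset.disjoint_left.mpr (fun k hki hkj => ?_)
    have h1 := (Finset.mem_filter.mp hki).2.2
    have h2 := (Finset.mem_filter.mp hkj).2.1
    have hle : M / 2^j' ≤ M / 2^(i+1) := by
      rw [div_le_div_iff₀ (by positivity) (by positivity)]
      have hpow : (2:ℝ)^(i+1) ≤ 2^j' := pow_le_pow_right₀ (by norm_num) (by omega)
      exact mul_le_mul_of_nonneg_left hpow hM.le
    linarith
  have hdisj : (↑(Finset.range J) : Set ℕ).PairwiseDisjoint L := by
    intro i _ j' _ hij
    rcases lt_or_gt_of_ne hij with h | h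
    · exact hdisj_lt i j' h
    · exact (hdisj_lt j' i h).symm
  have hnonneg : ∀ k ∈ (Finset.range J).biUnion L, (0:ℝ) ≤ |u k| ^ p :=
    fun k _ => Real.rpow_nonneg (abs_nonneg _) p
  calc ∑ k ∈ B, |u k| ^ p
      ≤ ∑ k ∈ (Finset.range J).biUnion L, |u k| ^ p :=
        Finset.sum_le_sum_of_subset_of_nonneg hcover (fun k hk _ => hnonneg k hk)
    _ = ∑ jj ∈ Finset.range J, ∑ k ∈ L jj, |u k| ^ p := Finset.sum_biUnion hdisj
    _ ≤ ∑ jj ∈ Finset.range J, (2*Cε)^q * M^p * r ^ jj := by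
        apply Finset.sum_le_sum
        intro jj _
        -- per level bound
        have h2j : (0:ℝ) < 2^jj := by positivity
        have hlev1 : ∑ k ∈ L jj, |u k| ^ p ≤ (L jj).card * (M / 2^jj) ^ p := by
          calc ∑ k ∈ L jj, |u k| ^ p ≤ ∑ _k ∈ L jj, (M / 2^jj) ^ p := by
                apply Finset.sum_le_sum
                intro k hk
                exact Real.rpow_le_rpow (abs_nonneg _)
                  (Finset.mem_filter.mp hk).2.1 (by linarith)
            _ = (L jj).card * (M / 2^jj) ^ p := by rw [Finset.sum_const, nsmul_eq_mul]
        have hcard : ((L jj).card : ℝ) ≤ (Cε * 2^(jj+1)) ^ q := by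
          have := hcount (L jj) (M / 2^(jj+1)) (by positivity)
            (fun k hk => ((Finset.mem_filter.mp hk).2.2).le)
          convert this using 2
          field_simp
        have hMpow : (0:ℝ) ≤ (M/2^jj)^p := Real.rpow_nonneg (by positivity) p
        calc ∑ k ∈ L jj, |u k| ^ p ≤ (L jj).card * (M / 2^jj) ^ p := hlev1
          _ ≤ (Cε * 2^(jj+1)) ^ q * (M / 2^jj) ^ p := by
              apply mul_le_mul_of_nonneg_right hcard hMpow
          _ = (2*Cε)^q * M^p * r ^ jj := by
              have h2exp : (2:ℝ) ^ ((jj:ℝ)*q) * ((2:ℝ) ^ ((jj:ℝ)*p))⁻¹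
                  = (2:ℝ) ^ ((q-p)*(jj:ℝ)) := by
                rw [← Real.rpow_neg (by norm_num : (0:ℝ) ≤ 2),
                  ← Real.rpow_add (by norm_num : (0:ℝ) < 2)]
                congr 1; ring
              rw [show Cε * 2^(jj+1) = (2*Cε) * 2^jj by ring,
                Real.mul_rpow (by positivity) (by positivity),
                Real.div_rpow hM.le (by positivity)]
              rw [show ((2:ℝ)^jj) = (2:ℝ) ^ (jj:ℝ) from (Real.rpow_natCast 2 jj).symm]
              rw [← Real.rpow_mul (by norm_num : (0:ℝ) ≤ 2),
                ← Real.rpow_mul (by norm_num : (0:ℝ) ≤ 2)]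
              rw [← Real.rpow_natCast r jj, hr_def,
                ← Real.rpow_mul (by norm_num : (0:ℝ) ≤ 2), ← h2exp]
              rw [div_eq_mul_inv]; ring
    _ = (2*Cε)^q * M^p * ∑ jj ∈ Finset.range J, r ^ jj := by
        rw [Finset.mul_sum]
    _ ≤ (2*Cε)^q * M^p * (1-r)⁻¹ := by
        apply mul_le_mul_of_nonneg_left (aux_geom r hr0.le hr1 J) (by positivity)
    _ = (2*Cε)^q * (1-r)⁻¹ * M^p := by ring

/-- if `Y` contains a normalized sequence with upper `p`-estimates
(`1 < p < ∞`), then there is a bounded linear operator `T` from Gowers' space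
`G = d_*((1/n)_n)` into `Y` with `‖T e_n‖ = 1` for all `n` (here `G` is represented by
any Banach space `D` isometrically identified with it via `j`). -/
theorem exists_operator_from_G (Y : Type*) [NormedAddCommGroup Y]
    [NormedSpace ℝ Y] [CompleteSpace Y] (p : ℝ) (hp : 1 < p)
    (y : ℕ → Y) (hnorm : ∀ n, ‖y n‖ = 1) (hup : HasUpperPEstimates p y)
    (D : Type*) [NormedAddCommGroup D] [NormedSpace ℝ D] [CompleteSpace D]
    (j : D →ₗ[ℝ] (ℕ → ℝ)) (hj : IsDStarRep (fun n => 1 / (n + 1 : ℝ)) D j) :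
    ∃ T : D →L[ℝ] Y, ∀ (n : ℕ) (x : D),
      j x = (Pi.single n 1 : ℕ → ℝ) → ‖T x‖ = 1 := by
  classical
  obtain ⟨C, hC, hupb⟩ := hup
  obtain ⟨hinj, hrange, hnormeq⟩ := hj
  have hp0 : (0:ℝ) < p := by linarith
  set q : ℝ := (p+1)/2 with hq_def
  set ε : ℝ := (p-1)/(p+1) with hε_def
  set Cε : ℝ := 1 + 1/ε with hCε_def
  have hq0 : 0 < q := by rw [hq_def]; linarith
  have hqp : q < p := by rw [hq_def]; linarith
  have hε0 : 0 < ε := by rw [hε_def]; exact div_pos (by linarith) (by linarith)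
  have hε1 : ε < 1 := by
    rw [hε_def, div_lt_one (by linarith)]; linarith
  have hqe : (1-ε)*q = 1 := by
    rw [hε_def, hq_def]; field_simp; ring
  have hCε0 : 0 < Cε := by rw [hCε_def]; positivity
  set r : ℝ := (2:ℝ)^(q-p) with hr_def
  have hr0 : 0 < r := Real.rpow_pos_of_pos (by norm_num) _
  have hr1 : r < 1 := Real.rpow_lt_one_of_one_lt_of_neg (by norm_num) (by linarith)
  set K : ℝ := (2*Cε)^q * (1-r)⁻¹ with hK_def
  have hK0 : 0 < K := by
    rw [hK_def]
    have h1 : (0:ℝ) < (2*Cε)^q := Real.rpow_pos_of_pos (by linarith) q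
    have h2 : (0:ℝ) < (1-r)⁻¹ := inv_pos.mpr (by linarith)
    positivity
  -- the key summability estimate
  have key : ∀ (x : D) (A : Finset ℕ), ∑ k ∈ A, |j x k| ^ p ≤ K * ‖x‖ ^ p := by
    intro x A
    by_cases hx0 : x = 0
    · subst hx0
      simp only [map_zero, Pi.zero_apply, abs_zero, norm_zero]
      rw [Real.zero_rpow (by linarith : p ≠ 0)]
      simp [Real.zero_rpow (by linarith : p ≠ 0)]
    · have hM : 0 < ‖x‖ := norm_pos_iff.mpr hx0
      set u : ℕ → ℝ := j x with hu_def
      set M : ℝ := ‖x‖ with hM_def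
      have hmem : u ∈ dStarSet (fun n => 1 / (n + 1 : ℝ)) := by
        rw [← hrange]; exact ⟨x, rfl⟩
      obtain ⟨h0, hquot⟩ := hmem
      have habs : Tendsto (fun k => |u k|) atTop (𝓝 0) := by
        simpa using h0.abs
      obtain ⟨B, hB⟩ := habs.bddAbove_range
      have hB' : ∀ k, |u k| ≤ B := fun k => hB ⟨k, rfl⟩
      have hnorm_eq : M = dStarNorm (fun n => 1 / (n + 1 : ℝ)) u := hnormeq x
      have hquot_bdd : BddAbove (Set.range
          (fun n => rearrSum u n / ∑ k ∈ Finset.range n, 1 / ((k:ℝ) + 1))) :=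
        hquot.bddAbove_range
      have hrearrle : ∀ n : ℕ,
          rearrSum u n ≤ M * ∑ k ∈ Finset.range n, 1 / ((k:ℝ) + 1) := by
        intro n
        rcases Nat.eq_zero_or_pos n with h1 | h1
        · subst h1; simp [rearrSum_zero]
        · have hHpos : 0 < ∑ k ∈ Finset.range n, 1 / ((k:ℝ) + 1) :=
            Finset.sum_pos (fun k _ => by positivity) (by simpa using h1.ne')
          have hle : rearrSum u n / (∑ k ∈ Finset.range n, 1 / ((k:ℝ) + 1)) ≤
              dStarNorm (fun n => 1 / (n + 1 : ℝ)) u := le_ciSup hquot_bdd n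
          rw [← hnorm_eq, div_le_iff₀ hHpos] at hle
          linarith [hle]
      have hub : ∀ k, |u k| ≤ M := by
        intro k
        have h1 : ∑ kk ∈ ({k} : Finset ℕ), |u kk| ≤ rearrSum u 1 := by
          have h2 := sum_le_rearrSum u B hB' {k}
          simpa using h2
        have h2 := hrearrle 1
        simp only [Finset.range_one, Finset.sum_singleton, Nat.cast_zero] at h1 h2
        norm_num at h2
        linarith
      have hcount : ∀ (A' : Finset ℕ) (t : ℝ), 0 < t → (∀ k ∈ A', t ≤ |u k|) →
          ((A'.card : ℝ)) ≤ (M * Cε / t) ^ q := by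
        intro A' t ht hta
        apply aux_count M Cε ε q hCε0 hM hε0 hε1 hqe hq0 _ t ht
        rcases Nat.eq_zero_or_pos A'.card with hc0 | hc1
        · rw [hc0]; norm_num [Real.zero_rpow hε0.ne']
        · have hcR : (1:ℝ) ≤ (A'.card : ℝ) := by exact_mod_cast hc1
          have h1 : (A'.card : ℝ) * t ≤ ∑ k ∈ A', |u k| := by
            calc (A'.card : ℝ) * t = ∑ _k ∈ A', t := by
                  rw [Finset.sum_const, nsmul_eq_mul]
              _ ≤ ∑ k ∈ A', |u k| := Finset.sum_le_sum hta
          have h2 : ∑ k ∈ A', |u k| ≤ rearrSum u A'.card := sum_le_rearrSum u B hB' A'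
          have h3 := hrearrle A'.card
          have h4 := aux_harmonic A'.card hc1
          have h5 : 1 + Real.log (A'.card : ℝ) ≤ Cε * (A'.card : ℝ) ^ ε := by
            have h6 := aux_log_rpow ε hε0 (A'.card : ℝ) hcR
            rw [hCε_def]; linarith
          have hεpow : (0:ℝ) ≤ (A'.card : ℝ) ^ ε := Real.rpow_nonneg (by positivity) ε
          calc (A'.card : ℝ) * t ≤ M * ∑ k ∈ Finset.range A'.card, 1 / ((k:ℝ) + 1) :=
                le_trans (h1.trans h2) h3
            _ ≤ M * (Cε * (A'.card : ℝ) ^ ε) :=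
                mul_le_mul_of_nonneg_left (h4.trans h5) hM.le
            _ = M * Cε * (A'.card : ℝ) ^ ε := by ring
      exact aux_master p q Cε M hp hq0 hqp hCε0 hM u hub hcount A
  -- partial sum operators
  set S : D → ℕ → Y := fun x n => ∑ k ∈ Finset.range n, (j x k) • y k with hS_def
  have hspow : ∀ (x : D) (n : ℕ),
      (∑ k ∈ Finset.range n, |j x k| ^ p) ^ (1/p) ≤ K ^ (1/p) * ‖x‖ := by
    intro x n
    have h1 := key x (Finset.range n)
    have hnn : (0:ℝ) ≤ ∑ k ∈ Finset.range n, |j x k| ^ p :=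
      Finset.sum_nonneg (fun k _ => Real.rpow_nonneg (abs_nonneg _) p)
    have h2 : (∑ k ∈ Finset.range n, |j x k| ^ p) ^ (1/p) ≤ (K * ‖x‖ ^ p) ^ (1/p) :=
      Real.rpow_le_rpow hnn h1 (by positivity)
    have h3 : (K * ‖x‖ ^ p) ^ (1/p) = K ^ (1/p) * ‖x‖ := by
      rw [Real.mul_rpow hK0.le (Real.rpow_nonneg (norm_nonneg x) p), one_div,
        Real.rpow_rpow_inv (norm_nonneg x) (by linarith : p ≠ 0)]
    rw [h3] at h2
    exact h2
  have hSbound : ∀ (x : D) (n : ℕ), ‖S x n‖ ≤ (C * K ^ (1/p)) * ‖x‖ := by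
    intro x n
    calc ‖S x n‖ ≤ C * ((∑ k ∈ Finset.range n, |j x k| ^ p) ^ (1/p)) := hupb n (j x)
      _ ≤ C * (K ^ (1/p) * ‖x‖) := mul_le_mul_of_nonneg_left (hspow x n) hC.le
      _ = (C * K ^ (1/p)) * ‖x‖ := by ring
  -- Cauchy sequences
  have hcauchy : ∀ x : D, CauchySeq (S x) := by
    intro x
    set g : ℕ → ℝ := fun k => |j x k| ^ p with hg_def
    have hg0 : ∀ k, 0 ≤ g k := fun k => Real.rpow_nonneg (abs_nonneg _) _
    set P : ℕ → ℝ := fun n => ∑ k ∈ Finset.range n, g k with hP_def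
    have hPmono : Monotone P := by
      intro a b hab
      exact Finset.sum_le_sum_of_subset_of_nonneg
        (Finset.range_subset_range.mpr hab) (fun k _ _ => hg0 k)
    have hPbdd : BddAbove (Set.range P) := by
      refine ⟨K * ‖x‖ ^ p, ?_⟩
      rintro s ⟨n, rfl⟩
      exact key x (Finset.range n)
    have hPcauchy : CauchySeq P := (tendsto_atTop_ciSup hPmono hPbdd).cauchySeq
    rw [Metric.cauchySeq_iff'] at hPcauchy ⊢
    intro ε0 hε0'
    have hδ0 : (0:ℝ) < (ε0 / (2*C)) ^ p := Real.rpow_pos_of_pos (by positivity) p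
    obtain ⟨N, hN⟩ := hPcauchy ((ε0 / (2*C)) ^ p) hδ0
    refine ⟨N, fun n hn => ?_⟩
    set a : ℕ → ℝ := fun k => if N ≤ k then j x k else 0 with ha_def
    have hsum1 : ∑ k ∈ Finset.range n, a k • y k = S x n - S x N := by
      rw [← Finset.sum_range_add_sum_Ico (fun k => a k • y k) hn]
      have hz : ∑ k ∈ Finset.range N, a k • y k = 0 := by
        apply Finset.sum_eq_zero
        intro k hk
        rw [ha_def]
        simp only
        rw [if_neg (by simpa using Finset.mem_range.mp hk)]
        simp
      have hi : ∑ k ∈ Finset.Ico N n, a k • y k = ∑ k ∈ Finset.Ico N n, (j x k) • y k := by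
        apply Finset.sum_congr rfl
        intro k hk
        rw [ha_def]
        simp only
        rw [if_pos (Finset.mem_Ico.mp hk).1]
      rw [hz, hi, zero_add, Finset.sum_Ico_eq_sub _ hn]
    have hsum2 : ∑ k ∈ Finset.range n, |a k| ^ p = P n - P N := by
      rw [← Finset.sum_range_add_sum_Ico (fun k => |a k| ^ p) hn]
      have hz : ∑ k ∈ Finset.range N, |a k| ^ p = 0 := by
        apply Finset.sum_eq_zero
        intro k hk
        rw [ha_def]
        simp only
        rw [if_neg (by simpa using Finset.mem_range.mp hk)]
        simp [Real.zero_rpow (by linarith : p ≠ 0)]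
      have hi : ∑ k ∈ Finset.Ico N n, |a k| ^ p = ∑ k ∈ Finset.Ico N n, g k := by
        apply Finset.sum_congr rfl
        intro k hk
        rw [ha_def, hg_def]
        simp only
        rw [if_pos (Finset.mem_Ico.mp hk).1]
      rw [hz, hi, zero_add, Finset.sum_Ico_eq_sub _ hn]
    have h1 := hupb n a
    rw [hsum1, hsum2] at h1
    have h2 : P n - P N ≤ (ε0 / (2*C)) ^ p := by
      have := hN n hn
      rw [Real.dist_eq] at this
      have h3 := le_abs_self (P n - P N)
      linarith
    have h3 : 0 ≤ P n - P N := sub_nonneg.mpr (hPmono hn)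
    have h4 : (P n - P N) ^ (1/p) ≤ ((ε0 / (2*C)) ^ p) ^ (1/p) :=
      Real.rpow_le_rpow h3 h2 (by positivity)
    rw [one_div, Real.rpow_rpow_inv (by positivity) (by linarith : p ≠ 0)] at h4
    have h5 : ‖S x n - S x N‖ ≤ C * (ε0 / (2*C)) := by
      calc ‖S x n - S x N‖ ≤ C * ((P n - P N) ^ (1/p)) := h1
        _ ≤ C * (ε0 / (2*C)) := by
            apply mul_le_mul_of_nonneg_left _ hC.le
            rw [one_div]; exact h4
    rw [dist_eq_norm]
    have h6 : C * (ε0 / (2*C)) = ε0 / 2 := by field_simp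
    rw [h6] at h5
    linarith
  have hconv : ∀ x : D, ∃ L : Y, Tendsto (S x) atTop (𝓝 L) :=
    fun x => cauchySeq_tendsto_of_complete (hcauchy x)
  choose F hF using hconv
  have hSadd : ∀ (x x' : D) (n : ℕ), S (x + x') n = S x n + S x' n := by
    intro x x' n
    rw [hS_def]
    simp only [map_add, Pi.add_apply, add_smul]
    rw [Finset.sum_add_distrib]
  have hSsmul : ∀ (c : ℝ) (x : D) (n : ℕ), S (c • x) n = c • S x n := by
    intro c x n
    rw [hS_def]
    simp only [map_smul, Pi.smul_apply, smul_eq_mul, Finset.smul_sum]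
    apply Finset.sum_congr rfl
    intro k _
    rw [smul_smul]
  have hFadd : ∀ x x' : D, F (x + x') = F x + F x' := by
    intro x x'
    apply tendsto_nhds_unique (hF (x + x'))
    have heq : S (x + x') = fun n => S x n + S x' n := by
      funext n; exact hSadd x x' n
    rw [heq]
    exact (hF x).add (hF x')
  have hFsmul : ∀ (c : ℝ) (x : D), F (c • x) = c • F x := by
    intro c x
    apply tendsto_nhds_unique (hF (c • x))
    have heq : S (c • x) = fun n => c • S x n := by
      funext n; exact hSsmul c x n
    rw [heq]
    exact (hF x).const_smul c
  set Flin : D →ₗ[ℝ] Y :=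
    { toFun := F, map_add' := hFadd, map_smul' := hFsmul } with hFlin_def
  have hFbound : ∀ x : D, ‖Flin x‖ ≤ (C * K ^ (1/p)) * ‖x‖ := by
    intro x
    exact le_of_tendsto (hF x).norm (Filter.Eventually.of_forall (hSbound x))
  refine ⟨LinearMap.mkContinuous Flin (C * K ^ (1/p)) hFbound, ?_⟩
  intro n x hx
  have hlim : Tendsto (S x) atTop (𝓝 (y n)) := by
    apply Tendsto.congr' _ tendsto_const_nhds
    filter_upwards [eventually_ge_atTop (n + 1)] with m hm
    rw [hS_def]
    simp only
    rw [hx]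
    have heq : ∀ k ∈ Finset.range m, (Pi.single n 1 : ℕ → ℝ) k • y k
        = if k = n then y k else 0 := by
      intro k _
      rw [Pi.single_apply]
      split <;> simp
    rw [Finset.sum_congr rfl heq, Finset.sum_ite_eq' (Finset.range m) n y,
      if_pos (Finset.mem_range.mpr (by omega))]
  have hFx : F x = y n := tendsto_nhds_unique (hF x) hlim
  show ‖Flin x‖ = 1
  show ‖F x‖ = 1
  rw [hFx, hnorm n]
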